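/- arXiv:1408.4536 — 2 statements merged into one kernel-verified Lean document; each statement's English description precedes it below -/
import Mathlib

section
/- Let Y ⊆ ℝ^d be bounded and convex. The set K_Y := { ψ* : ψ is a function from Y to ℝ ∪ {+∞} } of Legendre–Fenchel transforms over Y is convex: if φ₀ = ψ₀* and φ₁ = ψ₁* are both finite-valued and t ∈ [0,1], then (1-t)φ₀ + tφ₁ is also the Legendre–Fenchel transform of some function on Y. -/
open scoped RealInnerProductSpace

noncomputable def legendre {d : ℕ} (Y : Set (EuclideanSpace ℝ (Fin d)))
    (ψ : EuclideanSpace ℝ (Fin d) → EReal) (x : EuclideanSpace ℝ (Fin d)) : EReal :=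
  ⨆ y ∈ Y, ((⟪x, y⟫ : ℝ) : EReal) - ψ y

/-- The set `K_Y` of Legendre–Fenchel transforms over a bounded convex set `Y` is convex. -/
theorem KY_convex {d : ℕ} (Y : Set (EuclideanSpace ℝ (Fin d)))
    (hYb : Bornology.IsBounded Y) (hYc : Convex ℝ Y)
    (φ₀ φ₁ : EuclideanSpace ℝ (Fin d) → ℝ)
    (h₀ : ∃ ψ₀, ∀ x, (φ₀ x : EReal) = legendre Y ψ₀ x)
    (h₁ : ∃ ψ₁, ∀ x, (φ₁ x : EReal) = legendre Y ψ₁ x)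
    (t : ℝ) (ht : t ∈ Set.Icc (0:ℝ) 1) :
    ∃ ψ, ∀ x, (((1 - t) * φ₀ x + t * φ₁ x : ℝ) : EReal) = legendre Y ψ x := by
  obtain ⟨ψ₀, hψ₀⟩ := h₀
  obtain ⟨ψ₁, hψ₁⟩ := h₁
  obtain ⟨ht0, ht1⟩ := ht
  rcases eq_or_lt_of_le ht0 with h0 | h0
  · refine ⟨ψ₀, fun x => ?_⟩
    rw [← h0]
    simpa using hψ₀ x
  rcases eq_or_lt_of_le ht1 with h1 | h1
  · refine ⟨ψ₁, fun x => ?_⟩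
    rw [h1]
    simpa using hψ₁ x
  have hs : 0 < 1 - t := by linarith
  -- upper bound facts
  have hub₀ : ∀ x, ∀ y ∈ Y, ((⟪x, y⟫ : ℝ) : EReal) - ψ₀ y ≤ (φ₀ x : EReal) := by
    intro x y hy
    rw [hψ₀ x]
    exact le_iSup₂ (f := fun y (_ : y ∈ Y) => ((⟪x, y⟫ : ℝ) : EReal) - ψ₀ y) y hy
  have hub₁ : ∀ x, ∀ y ∈ Y, ((⟪x, y⟫ : ℝ) : EReal) - ψ₁ y ≤ (φ₁ x : EReal) := by
    intro x y hy
    rw [hψ₁ x]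
    exact le_iSup₂ (f := fun y (_ : y ∈ Y) => ((⟪x, y⟫ : ℝ) : EReal) - ψ₁ y) y hy
  -- ψ₀, ψ₁ are never ⊥ on Y
  have hb₀ : ∀ y ∈ Y, ψ₀ y ≠ ⊥ := by
    intro y hy hbot
    have := hub₀ 0 y hy
    rw [hbot, EReal.coe_sub_bot, top_le_iff] at this
    exact EReal.coe_ne_top _ this
  have hb₁ : ∀ y ∈ Y, ψ₁ y ≠ ⊥ := by
    intro y hy hbot
    have := hub₁ 0 y hy
    rw [hbot, EReal.coe_sub_bot, top_le_iff] at this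
    exact EReal.coe_ne_top _ this
  -- real lower bounds for ψ₀, ψ₁
  have hlb₀ : ∀ x, ∀ y ∈ Y, ((⟪x, y⟫ - φ₀ x : ℝ) : EReal) ≤ ψ₀ y := by
    intro x y hy
    rcases eq_or_ne (ψ₀ y) ⊤ with hT | hT
    · rw [hT]; exact le_top
    lift ψ₀ y to ℝ using ⟨hT, hb₀ y hy⟩ with r hr
    have := hub₀ x y hy
    rw [← hr, ← EReal.coe_sub, EReal.coe_le_coe_iff] at this
    rw [EReal.coe_le_coe_iff]
    linarith
  have hlb₁ : ∀ x, ∀ y ∈ Y, ((⟪x, y⟫ - φ₁ x : ℝ) : EReal) ≤ ψ₁ y := by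
    intro x y hy
    rcases eq_or_ne (ψ₁ y) ⊤ with hT | hT
    · rw [hT]; exact le_top
    lift ψ₁ y to ℝ using ⟨hT, hb₁ y hy⟩ with r hr
    have := hub₁ x y hy
    rw [← hr, ← EReal.coe_sub, EReal.coe_le_coe_iff] at this
    rw [EReal.coe_le_coe_iff]
    linarith
  refine ⟨fun y => ⨅ (y₀ : _) (_ : y₀ ∈ Y) (y₁ : _) (_ : y₁ ∈ Y)
      (_ : (1 - t) • y₀ + t • y₁ = y),
      (((1 - t : ℝ) : EReal) * ψ₀ y₀ + ((t : ℝ) : EReal) * ψ₁ y₁), fun x => ?_⟩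
  refine le_antisymm ?_ ?_
  · -- coe ≤ legendre : approximate the two suprema
    have key : ∀ ε : ℝ, 0 < ε →
        (((1 - t) * φ₀ x + t * φ₁ x - ε : ℝ) : EReal) ≤ legendre Y
          (fun y => ⨅ (y₀ : _) (_ : y₀ ∈ Y) (y₁ : _) (_ : y₁ ∈ Y)
            (_ : (1 - t) • y₀ + t • y₁ = y),
            (((1 - t : ℝ) : EReal) * ψ₀ y₀ + ((t : ℝ) : EReal) * ψ₁ y₁)) x := by
      intro ε hε
      -- pick near-optimal y₀
      have hlt₀ : ((φ₀ x - ε : ℝ) : EReal) < legendre Y ψ₀ x := by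
        rw [← hψ₀ x]
        exact_mod_cast sub_lt_self _ hε
      rw [legendre, lt_iSup_iff] at hlt₀
      obtain ⟨y₀, hlt₀⟩ := hlt₀
      rw [lt_iSup_iff] at hlt₀
      obtain ⟨hy₀, hlt₀⟩ := hlt₀
      have hT₀ : ψ₀ y₀ ≠ ⊤ := by
        intro hT
        rw [hT, EReal.sub_top] at hlt₀
        exact not_lt_bot hlt₀
      lift ψ₀ y₀ to ℝ using ⟨hT₀, hb₀ y₀ hy₀⟩ with r₀ hr₀
      rw [← EReal.coe_sub, EReal.coe_lt_coe_iff] at hlt₀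
      -- pick near-optimal y₁
      have hlt₁ : ((φ₁ x - ε : ℝ) : EReal) < legendre Y ψ₁ x := by
        rw [← hψ₁ x]
        exact_mod_cast sub_lt_self _ hε
      rw [legendre, lt_iSup_iff] at hlt₁
      obtain ⟨y₁, hlt₁⟩ := hlt₁
      rw [lt_iSup_iff] at hlt₁
      obtain ⟨hy₁, hlt₁⟩ := hlt₁
      have hT₁ : ψ₁ y₁ ≠ ⊤ := by
        intro hT
        rw [hT, EReal.sub_top] at hlt₁
        exact not_lt_bot hlt₁
      lift ψ₁ y₁ to ℝ using ⟨hT₁, hb₁ y₁ hy₁⟩ with r₁ hr₁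
      rw [← EReal.coe_sub, EReal.coe_lt_coe_iff] at hlt₁
      -- the convex combination
      set y : EuclideanSpace ℝ (Fin d) := (1 - t) • y₀ + t • y₁ with hy_def
      have hyY : y ∈ Y := hYc hy₀ hy₁ (by linarith) (le_of_lt h0) (by ring)
      have hinner : ⟪x, y⟫ = (1 - t) * ⟪x, y₀⟫ + t * ⟪x, y₁⟫ := by
        rw [hy_def, inner_add_right, real_inner_smul_right, real_inner_smul_right]
      have hψy : (⨅ (a : _) (_ : a ∈ Y) (b : _) (_ : b ∈ Y)
            (_ : (1 - t) • a + t • b = y),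
            (((1 - t : ℝ) : EReal) * ψ₀ a + ((t : ℝ) : EReal) * ψ₁ b))
          ≤ (((1 - t) * r₀ + t * r₁ : ℝ) : EReal) := by
        refine iInf_le_of_le y₀ (iInf_le_of_le hy₀ (iInf_le_of_le y₁
          (iInf_le_of_le hy₁ (iInf_le_of_le rfl ?_))))
        rw [← hr₀, ← hr₁]
        norm_cast
      calc (((1 - t) * φ₀ x + t * φ₁ x - ε : ℝ) : EReal)
          ≤ ((⟪x, y⟫ - ((1 - t) * r₀ + t * r₁) : ℝ) : EReal) := by
            rw [EReal.coe_le_coe_iff, hinner]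
            have h₀' := mul_le_mul_of_nonneg_left (le_of_lt hlt₀) (le_of_lt hs)
            have h₁' := mul_le_mul_of_nonneg_left (le_of_lt hlt₁) (le_of_lt h0)
            nlinarith
        _ = ((⟪x, y⟫ : ℝ) : EReal) - (((1 - t) * r₀ + t * r₁ : ℝ) : EReal) := by
            rw [← EReal.coe_sub]
        _ ≤ ((⟪x, y⟫ : ℝ) : EReal) - (⨅ (a : _) (_ : a ∈ Y) (b : _) (_ : b ∈ Y)
              (_ : (1 - t) • a + t • b = y),
              (((1 - t : ℝ) : EReal) * ψ₀ a + ((t : ℝ) : EReal) * ψ₁ b)) :=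
            EReal.sub_le_sub le_rfl hψy
        _ ≤ _ := le_iSup₂ (f := fun y (_ : y ∈ Y) => ((⟪x, y⟫ : ℝ) : EReal) -
              ⨅ (a : _) (_ : a ∈ Y) (b : _) (_ : b ∈ Y)
                (_ : (1 - t) • a + t • b = y),
                (((1 - t : ℝ) : EReal) * ψ₀ a + ((t : ℝ) : EReal) * ψ₁ b)) y hyY
    refine le_of_forall_lt fun c hc => ?_
    rcases lt_or_ge c (((1 - t) * φ₀ x + t * φ₁ x - 1 : ℝ) : EReal) with h | h
    · exact lt_of_lt_of_le h (key 1 one_pos)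
    · have hcT : c ≠ ⊤ := ne_top_of_lt hc
      have hcB : c ≠ ⊥ := by
        intro hB; rw [hB] at h; exact (EReal.coe_ne_bot _ (le_bot_iff.1 h)).elim
      lift c to ℝ using ⟨hcT, hcB⟩ with r hr
      rw [EReal.coe_lt_coe_iff] at hc
      set ε : ℝ := ((1 - t) * φ₀ x + t * φ₁ x - r) / 2 with hε_def
      have hε : 0 < ε := by rw [hε_def]; linarith
      refine lt_of_lt_of_le ?_ (key ε hε)
      rw [EReal.coe_lt_coe_iff, hε_def]
      linarith
  · -- legendre ≤ coe
    rw [legendre]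
    refine iSup₂_le fun y hy => ?_
    have hψy : ((⟪x, y⟫ - ((1 - t) * φ₀ x + t * φ₁ x) : ℝ) : EReal) ≤
        ⨅ (a : _) (_ : a ∈ Y) (b : _) (_ : b ∈ Y)
          (_ : (1 - t) • a + t • b = y),
          (((1 - t : ℝ) : EReal) * ψ₀ a + ((t : ℝ) : EReal) * ψ₁ b) := by
      refine le_iInf fun y₀ => le_iInf fun hy₀ => le_iInf fun y₁ => le_iInf fun hy₁ =>
        le_iInf fun hcomb => ?_
      rcases eq_or_ne (ψ₀ y₀) ⊤ with hT₀ | hT₀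
      · rw [hT₀, EReal.coe_mul_top_of_pos (by exact_mod_cast hs),
          EReal.top_add_of_ne_bot]
        · exact le_top
        · rcases eq_or_ne (ψ₁ y₁) ⊤ with hT | hT
          · rw [hT, EReal.coe_mul_top_of_pos (by exact_mod_cast h0)]
            exact top_ne_bot
          · lift ψ₁ y₁ to ℝ using ⟨hT, hb₁ y₁ hy₁⟩ with r hr
            rw [← EReal.coe_mul]
            exact EReal.coe_ne_bot _
      rcases eq_or_ne (ψ₁ y₁) ⊤ with hT₁ | hT₁
      · rw [hT₁, EReal.coe_mul_top_of_pos (by exact_mod_cast h0),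
          EReal.add_top_of_ne_bot]
        · exact le_top
        · lift ψ₀ y₀ to ℝ using ⟨hT₀, hb₀ y₀ hy₀⟩ with r hr
          rw [← EReal.coe_mul]
          exact EReal.coe_ne_bot _
      lift ψ₀ y₀ to ℝ using ⟨hT₀, hb₀ y₀ hy₀⟩ with r₀ hr₀
      lift ψ₁ y₁ to ℝ using ⟨hT₁, hb₁ y₁ hy₁⟩ with r₁ hr₁
      have hl₀ : ⟪x, y₀⟫ - φ₀ x ≤ r₀ := by
        have := hlb₀ x y₀ hy₀
        rw [← hr₀, EReal.coe_le_coe_iff] at this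
        exact this
      have hl₁ : ⟪x, y₁⟫ - φ₁ x ≤ r₁ := by
        have := hlb₁ x y₁ hy₁
        rw [← hr₁, EReal.coe_le_coe_iff] at this
        exact this
      have hinner : ⟪x, y⟫ = (1 - t) * ⟪x, y₀⟫ + t * ⟪x, y₁⟫ := by
        rw [← hcomb, inner_add_right, real_inner_smul_right, real_inner_smul_right]
      rw [← EReal.coe_mul, ← EReal.coe_mul, ← EReal.coe_add, EReal.coe_le_coe_iff, hinner]
      have h₀' := mul_le_mul_of_nonneg_left hl₀ (le_of_lt hs)
      have h₁' := mul_le_mul_of_nonneg_left hl₁ (le_of_lt h0)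
      nlinarith
    rw [EReal.sub_le_iff_le_add (.inr (EReal.coe_ne_top _)) (.inr (EReal.coe_ne_bot _))]
    calc ((⟪x, y⟫ : ℝ) : EReal)
        = (((1 - t) * φ₀ x + t * φ₁ x : ℝ) : EReal)
          + ((⟪x, y⟫ - ((1 - t) * φ₀ x + t * φ₁ x) : ℝ) : EReal) := by
          norm_cast; ring
      _ ≤ _ := add_le_add_right hψy _
end

section
/- Fix α ≥ 1 and d ≥ 1 and define U_α(ρ) := ρ^α · (-log(1 - ρ^{1/d})) for ρ ∈ [0,1), U_α(0) = 0. Then the map r ↦ r^d U_α(r^{-d}), defined for r > 1, is convex and non-increasing. -/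
open Set Real

private lemma rpow_convexOn_Ioi_of_nonpos {c : ℝ} (hc : c ≤ 0) :
    ConvexOn ℝ (Set.Ioi (1:ℝ)) (fun x : ℝ => x ^ c) := by
  have hint : interior (Set.Ioi (1:ℝ)) = Set.Ioi (1:ℝ) := interior_Ioi
  refine convexOn_of_hasDerivWithinAt2_nonneg (f' := fun x => c * x ^ (c - 1))
    (f'' := fun x => c * ((c - 1) * x ^ (c - 1 - 1))) (convex_Ioi 1) ?_ ?_ ?_ ?_
  · intro x hx
    have hx0 : (0:ℝ) < x := lt_trans one_pos hx
    exact (Real.continuousAt_rpow_const x c (Or.inl hx0.ne')).continuousWithinAt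
  · intro x hx
    rw [hint] at hx ⊢
    have hx0 : (0:ℝ) < x := lt_trans one_pos hx
    exact (Real.hasDerivAt_rpow_const (p := c) (Or.inl hx0.ne')).hasDerivWithinAt
  · intro x hx
    rw [hint] at hx ⊢
    have hx0 : (0:ℝ) < x := lt_trans one_pos hx
    exact ((Real.hasDerivAt_rpow_const (p := c - 1)
      (Or.inl hx0.ne')).const_mul c).hasDerivWithinAt
  · intro x hx
    rw [hint] at hx
    have hx0 : (0:ℝ) < x := lt_trans one_pos hx
    have h1 : (0:ℝ) ≤ x ^ (c - 1 - 1) := Real.rpow_nonneg hx0.le _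
    show (0:ℝ) ≤ c * ((c - 1) * x ^ (c - 1 - 1))
    rw [← mul_assoc]
    have h2 : (0:ℝ) ≤ c * (c - 1) := by nlinarith
    exact mul_nonneg h2 h1

private lemma negLog_convexOn_Ioi :
    ConvexOn ℝ (Set.Ioi (1:ℝ)) (fun x : ℝ => -Real.log (1 - x⁻¹)) := by
  have hint : interior (Set.Ioi (1:ℝ)) = Set.Ioi (1:ℝ) := interior_Ioi
  have key : ∀ x : ℝ, x ∈ Set.Ioi (1:ℝ) → (0:ℝ) < 1 - x⁻¹ := by
    intro x hx
    have hx1 : (1:ℝ) < x := hx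
    have : x⁻¹ < 1 := inv_lt_one_of_one_lt₀ hx1
    linarith
  refine convexOn_of_hasDerivWithinAt2_nonneg (f' := fun x => -(x ^ 2 - x)⁻¹)
    (f'' := fun x => (2 * x - 1) / (x ^ 2 - x) ^ 2) (convex_Ioi 1) ?_ ?_ ?_ ?_
  · intro x hx
    have hx0 : (0:ℝ) < x := lt_trans one_pos hx
    have hne : (1 - x⁻¹) ≠ 0 := (key x hx).ne'
    have hcont : ContinuousAt (fun y : ℝ => 1 - y⁻¹) x :=
      continuousAt_const.sub (continuousAt_inv₀ hx0.ne')
    exact ((hcont.log hne).neg).continuousWithinAt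
  · intro x hx
    rw [hint] at hx ⊢
    have hx1 : (1:ℝ) < x := hx
    have hx0 : (0:ℝ) < x := lt_trans one_pos hx
    have hne : (1 - x⁻¹) ≠ 0 := (key x hx).ne'
    have hu : HasDerivAt (fun y : ℝ => 1 - y⁻¹) (0 - -(x ^ 2)⁻¹) x :=
      (hasDerivAt_const x (1:ℝ)).sub (hasDerivAt_inv hx0.ne')
    have hl : HasDerivAt (fun y : ℝ => -Real.log (1 - y⁻¹))
        (-((0 - -(x ^ 2)⁻¹) / (1 - x⁻¹))) x := (hu.log hne).neg
    have heq : -((0 - -(x ^ 2)⁻¹) / (1 - x⁻¹)) = -(x ^ 2 - x)⁻¹ := by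
      have hxne : x ≠ 0 := hx0.ne'
      field_simp
      ring
    rw [heq] at hl
    exact hl.hasDerivWithinAt
  · intro x hx
    rw [hint] at hx ⊢
    have hx1 : (1:ℝ) < x := hx
    have hx0 : (0:ℝ) < x := lt_trans one_pos hx
    have hvne : x ^ 2 - x ≠ 0 := by nlinarith
    have hv : HasDerivAt (fun y : ℝ => y ^ 2 - y) ((2:ℕ) * x ^ (2 - 1) - 1) x :=
      (hasDerivAt_pow 2 x).sub (hasDerivAt_id x)
    have h2 : HasDerivAt (fun y : ℝ => -(y ^ 2 - y)⁻¹)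
        (-(-(((2:ℕ) * x ^ (2 - 1) - 1)) / (x ^ 2 - x) ^ 2)) x := (hv.inv hvne).neg
    have heq : (-(-(((2:ℕ) * x ^ (2 - 1) - 1)) / (x ^ 2 - x) ^ 2))
        = (2 * x - 1) / (x ^ 2 - x) ^ 2 := by
      push_cast
      ring
    rw [heq] at h2
    exact h2.hasDerivWithinAt
  · intro x hx
    rw [hint] at hx
    have hx1 : (1:ℝ) < x := hx
    have hnum : (0:ℝ) ≤ 2 * x - 1 := by linarith
    positivity

/-- The smoothed congestion integrand `U_α(ρ) = ρ^α · (-log(1 - ρ^{1/d}))` satisfies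
McCann's condition on `(1,∞)`: the map `r ↦ r^d U_α(r^{-d})` is convex and
non-increasing for `r > 1`, whenever `α ≥ 1` and `d ≥ 1`. -/
theorem congestion_integrand_mccann (α : ℝ) (hα : 1 ≤ α) (d : ℕ) (hd : 1 ≤ d) :
    let U : ℝ → ℝ := fun ρ => ρ ^ α * (-Real.log (1 - ρ ^ (1 / (d : ℝ))))
    ConvexOn ℝ (Set.Ioi (1:ℝ)) (fun r : ℝ => r ^ (d : ℝ) * U (r ^ (-(d : ℝ)))) ∧
    AntitoneOn (fun r : ℝ => r ^ (d : ℝ) * U (r ^ (-(d : ℝ)))) (Set.Ioi (1:ℝ)) := by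
  intro U
  have hd0 : (0:ℝ) < (d:ℝ) := by exact_mod_cast hd
  set c : ℝ := (d:ℝ) + -(d:ℝ) * α with hc_def
  have hc : c ≤ 0 := by nlinarith
  set g : ℝ → ℝ := fun x => x ^ c with hg_def
  set h : ℝ → ℝ := fun x => -Real.log (1 - x⁻¹) with hh_def
  -- the original function agrees with `g * h` on `Ioi 1`
  have heq : Set.EqOn (fun r : ℝ => r ^ (d : ℝ) * U (r ^ (-(d : ℝ)))) (g * h)
      (Set.Ioi (1:ℝ)) := by
    intro r hr
    have hr0 : (0:ℝ) < r := lt_trans one_pos hr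
    have e1 : (r ^ (-(d:ℝ))) ^ α = r ^ (-(d:ℝ) * α) := (Real.rpow_mul hr0.le _ _).symm
    have e2 : (r ^ (-(d:ℝ))) ^ (1 / (d:ℝ)) = r⁻¹ := by
      rw [← Real.rpow_mul hr0.le]
      have : -(d:ℝ) * (1 / (d:ℝ)) = -1 := by field_simp
      rw [this, Real.rpow_neg_one]
    simp only [U, e1, e2, Pi.mul_apply, hg_def, hh_def]
    rw [← mul_assoc, ← Real.rpow_add hr0]
  have key : ∀ x : ℝ, x ∈ Set.Ioi (1:ℝ) → (0:ℝ) < 1 - x⁻¹ := by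
    intro x hx
    have : x⁻¹ < 1 := inv_lt_one_of_one_lt₀ hx
    linarith
  have hg_nonneg : ∀ ⦃x:ℝ⦄, x ∈ Set.Ioi (1:ℝ) → 0 ≤ g x := fun x hx =>
    Real.rpow_nonneg (le_of_lt (lt_trans one_pos hx)) c
  have hh_nonneg : ∀ ⦃x:ℝ⦄, x ∈ Set.Ioi (1:ℝ) → 0 ≤ h x := by
    intro x hx
    have h1 : 1 - x⁻¹ ≤ 1 := by
      have : (0:ℝ) < x⁻¹ := inv_pos.mpr (lt_trans one_pos hx)
      linarith
    simpa [hh_def] using Real.log_nonpos (key x hx).le h1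
  have hg_anti : AntitoneOn g (Set.Ioi (1:ℝ)) := by
    intro x hx y _ hxy
    exact Real.rpow_le_rpow_of_nonpos (lt_trans one_pos hx) hxy hc
  have hh_anti : AntitoneOn h (Set.Ioi (1:ℝ)) := by
    intro x hx y hy hxy
    have hx0 : (0:ℝ) < x := lt_trans one_pos hx
    have hinv : y⁻¹ ≤ x⁻¹ := by
      apply inv_anti₀ hx0 hxy
    have : Real.log (1 - x⁻¹) ≤ Real.log (1 - y⁻¹) :=
      Real.log_le_log (key x hx) (by linarith)
    simpa [hh_def] using neg_le_neg this
  have hg_conv : ConvexOn ℝ (Set.Ioi (1:ℝ)) g := rpow_convexOn_Ioi_of_nonpos hc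
  have hh_conv : ConvexOn ℝ (Set.Ioi (1:ℝ)) h := negLog_convexOn_Ioi
  have hprod_conv : ConvexOn ℝ (Set.Ioi (1:ℝ)) (g * h) :=
    hg_conv.mul hh_conv hg_nonneg hh_nonneg (hg_anti.monovaryOn hh_anti)
  have hprod_anti : AntitoneOn (g * h) (Set.Ioi (1:ℝ)) := by
    intro x hx y hy hxy
    have h1 : g y * h y ≤ g x * h y :=
      mul_le_mul_of_nonneg_right (hg_anti hx hy hxy) (hh_nonneg hy)
    have h2 : g x * h y ≤ g x * h x :=
      mul_le_mul_of_nonneg_left (hh_anti hx hy hxy) (hg_nonneg hx)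
    simpa using h1.trans h2
  constructor
  · exact hprod_conv.congr heq.symm
  · intro x hx y hy hxy
    rw [heq hx, heq hy]
    exact hprod_anti hx hy hxy
end
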